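/- For simple symmetric random walk on ℤ started at 1, the probability that the first hitting time of 0 equals 2n+1 is 2^{-1-2n}/(n+1) times the central binomial coefficient C(2n,n). -/

import Mathlib

open MeasureTheory ProbabilityTheory

open List DyckStep

namespace SRWaux

def val (b : Bool) : ℤ := if b then 1 else -1

lemma val_one_or (b : Bool) : val b = 1 ∨ val b = -1 := by cases b <;> simp [val]

def ext (m : ℕ) (b : Fin m → Bool) (i : ℕ) : ℤ :=
  if h : i < m then val (b ⟨i, h⟩) else 0

def psum (m : ℕ) (b : Fin m → Bool) (k : ℕ) : ℤ :=
  ∑ i ∈ Finset.range k, ext m b i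

def Good (n : ℕ) (b : Fin (2*n+1) → Bool) : Prop :=
  (∀ k < 2*n+1, 1 + psum (2*n+1) b k ≠ 0) ∧ 1 + psum (2*n+1) b (2*n+1) = 0

instance (n : ℕ) : DecidablePred (Good n) := fun _ => by unfold Good; infer_instance

/-- counting lemma for lists of Dyck steps -/
lemma count_sub_count (L : List DyckStep) (k : ℕ) (hk : k ≤ L.length) :
    ((L.take k).count U : ℤ) - (L.take k).count D
      = ∑ i ∈ Finset.range k,
          (if h : i < L.length then (if L.get ⟨i, h⟩ = U then (1:ℤ) else -1) else 0) := by
  induction k with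
  | zero => simp
  | succ k ih =>
    have hk' : k < L.length := hk
    rw [← List.take_concat_get' L k hk', Finset.sum_range_succ, ← ih (le_of_lt hk'),
      List.count_append, List.count_append]
    rw [dif_pos hk']
    rcases (L.get ⟨k, hk'⟩).dichotomy with h | h <;>
      rw [List.get_eq_getElem] at h <;> simp [h] <;> ring

end SRWaux

namespace SRWaux

lemma psum_succ (m : ℕ) (b : Fin m → Bool) (k : ℕ) :
    psum m b (k+1) = psum m b k + ext m b k := Finset.sum_range_succ _ _

lemma good_nonneg {n : ℕ} {b : Fin (2*n+1) → Bool} (hb : Good n b) :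
    ∀ k ≤ 2*n, 0 ≤ psum (2*n+1) b k := by
  intro k hk
  induction k with
  | zero => simp [psum]
  | succ k ih =>
    have h0 := ih (by omega)
    have h1 := hb.1 (k+1) (by omega)
    rw [psum_succ] at h1 ⊢
    have h2 : ext (2*n+1) b k = 1 ∨ ext (2*n+1) b k = -1 := by
      unfold ext; rw [dif_pos (by omega : k < 2*n+1)]; exact val_one_or _
    omega

lemma good_last {n : ℕ} {b : Fin (2*n+1) → Bool} (hb : Good n b) :
    b ⟨2*n, by omega⟩ = false ∧ psum (2*n+1) b (2*n) = 0 := by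
  have h0 := good_nonneg hb (2*n) le_rfl
  have h1 := hb.2
  rw [psum_succ] at h1
  have hlt : 2*n < 2*n+1 := by omega
  have h2 : ext (2*n+1) b (2*n) = val (b ⟨2*n, hlt⟩) := dif_pos hlt
  rcases (b ⟨2*n, hlt⟩).eq_false_or_eq_true with h | h
  · rw [h] at h2; simp [val] at h2; exfalso; omega
  · rw [h] at h2; simp [val] at h2; exact ⟨h, by omega⟩

/-- The list of the first `2n` steps. -/
def Lst (n : ℕ) (b : Fin (2*n+1) → Bool) : List DyckStep :=
  List.ofFn (fun i : Fin (2*n) => if b i.castSucc then U else D)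

@[simp] lemma length_Lst (n : ℕ) (b : Fin (2*n+1) → Bool) : (Lst n b).length = 2*n := by
  simp [Lst]

lemma count_take_Lst (n : ℕ) (b : Fin (2*n+1) → Bool) (k : ℕ) (hk : k ≤ 2*n) :
    (((Lst n b).take k).count U : ℤ) - ((Lst n b).take k).count D = psum (2*n+1) b k := by
  rw [count_sub_count _ k (by simp [hk])]
  apply Finset.sum_congr rfl
  intro i hi
  have hi' : i < 2*n := lt_of_lt_of_le (Finset.mem_range.mp hi) hk
  rw [dif_pos (by simpa using hi')]
  unfold ext
  rw [dif_pos (by omega : i < 2*n+1)]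
  have : (Lst n b).get ⟨i, by simpa using hi'⟩ = if b ⟨i, by omega⟩ then U else D := by
    simp only [Lst, List.get_ofFn, Fin.cast_mk, Fin.castSucc_mk]; rfl
  rw [this]
  rcases (b ⟨i, by omega⟩).eq_false_or_eq_true with h | h <;> simp [h, val]

lemma count_U_add_count_D (L : List DyckStep) : L.count U + L.count D = L.length := by
  induction L with
  | nil => simp
  | cons a l ih => cases a <;> simp [List.count_cons] <;> omega

lemma good_counts {n : ℕ} {b : Fin (2*n+1) → Bool} (hb : Good n b) :
    (Lst n b).count U = (Lst n b).count D := by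
  have h := count_take_Lst n b (2*n) le_rfl
  rw [List.take_of_length_le (by simp)] at h
  rw [(good_last hb).2] at h
  omega

lemma good_prefix {n : ℕ} {b : Fin (2*n+1) → Bool} (hb : Good n b) (i : ℕ) :
    ((Lst n b).take i).count D ≤ ((Lst n b).take i).count U := by
  rcases le_or_gt i (2*n) with h | h
  · have := count_take_Lst n b i h
    have h0 := good_nonneg hb i h
    omega
  · rw [List.take_of_length_le (by simp; omega)]
    have := count_take_Lst n b (2*n) le_rfl
    rw [List.take_of_length_le (by simp)] at this
    have h0 := good_nonneg hb (2*n) le_rfl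
    omega

def goodDyck {n : ℕ} (b : {b : Fin (2*n+1) → Bool // Good n b}) :
    {p : DyckWord // p.semilength = n} :=
  ⟨⟨Lst n b.1, good_counts b.2, good_prefix b.2⟩, by
    have h1 := count_U_add_count_D (Lst n b.1)
    have h2 := good_counts b.2
    have h3 := length_Lst n b.1
    simp only [DyckWord.semilength]
    omega⟩

end SRWaux

namespace SRWaux

lemma dyck_length {n : ℕ} (p : DyckWord) (hp : p.semilength = n) : p.toList.length = 2*n := by
  have := p.two_mul_semilength_eq_length; omega

def dyckGoodFun {n : ℕ} (p : {p : DyckWord // p.semilength = n}) (i : Fin (2*n+1)) : Bool :=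
  if h : (i : ℕ) < 2*n then
    (p.1.toList.get ⟨i, by rw [dyck_length p.1 p.2]; exact h⟩ == U) else false

lemma psum_dyck {n : ℕ} (p : {p : DyckWord // p.semilength = n}) (k : ℕ) (hk : k ≤ 2*n) :
    psum (2*n+1) (dyckGoodFun p) k
      = ((p.1.toList.take k).count U : ℤ) - (p.1.toList.take k).count D := by
  rw [count_sub_count _ k (by rw [dyck_length p.1 p.2]; omega)]
  apply Finset.sum_congr rfl
  intro i hi
  have hi' : i < 2*n := lt_of_lt_of_le (Finset.mem_range.mp hi) hk
  have hil : i < p.1.toList.length := by rw [dyck_length p.1 p.2]; exact hi'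
  rw [dif_pos hil]
  unfold ext
  rw [dif_pos (by omega : i < 2*n+1)]
  have hb : dyckGoodFun p ⟨i, by omega⟩ = (p.1.toList.get ⟨i, hil⟩ == U) := by
    unfold dyckGoodFun
    rw [dif_pos hi']
  rw [hb]
  rcases (p.1.toList.get ⟨i, hil⟩).dichotomy with h | h <;> simp [h, val]

lemma good_dyckGoodFun {n : ℕ} (p : {p : DyckWord // p.semilength = n}) :
    Good n (dyckGoodFun p) := by
  constructor
  · intro k hk
    have h1 := psum_dyck p k (by omega)
    have h2 := p.1.count_D_le_count_U k
    omega
  · have h1 := psum_dyck p (2*n) le_rfl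
    rw [List.take_of_length_le (by rw [dyck_length p.1 p.2])] at h1
    have h2 := p.1.count_U_eq_count_D
    rw [psum_succ, h1, h2]
    have h3 : ext (2*n+1) (dyckGoodFun p) (2*n) = val (dyckGoodFun p ⟨2*n, by omega⟩) :=
      dif_pos (by omega)
    have h4 : dyckGoodFun p ⟨2*n, by omega⟩ = false := by
      unfold dyckGoodFun; rw [dif_neg (by simp)]
    rw [h3, h4]
    simp [val]

def goodOfDyck {n : ℕ} (p : {p : DyckWord // p.semilength = n}) :
    {b : Fin (2*n+1) → Bool // Good n b} := ⟨dyckGoodFun p, good_dyckGoodFun p⟩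

def goodEquiv (n : ℕ) : {b : Fin (2*n+1) → Bool // Good n b} ≃ {p : DyckWord // p.semilength = n} where
  toFun := goodDyck
  invFun := goodOfDyck
  left_inv b := by
    apply Subtype.ext
    funext i
    show dyckGoodFun (goodDyck b) i = b.1 i
    rcases lt_or_ge (i : ℕ) (2*n) with h | h
    · unfold dyckGoodFun
      rw [dif_pos h]
      have hg : (goodDyck b).1.toList.get ⟨(i : ℕ), by
          rw [dyck_length _ (goodDyck b).2]; exact h⟩
          = if b.1 ⟨(i : ℕ), by omega⟩ then U else D := by
        show (Lst n b.1).get _ = _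
        exact List.get_ofFn _ _
      rw [hg]
      have : (⟨(i : ℕ), by omega⟩ : Fin (2*n+1)) = i := Fin.ext rfl
      rw [this]
      rcases (b.1 i).eq_false_or_eq_true with hb | hb <;> simp [hb]
    · unfold dyckGoodFun
      rw [dif_neg (by omega)]
      have hival : (i : ℕ) = 2*n := by omega
      have hi : i = ⟨2*n, by omega⟩ := Fin.ext (by simp [hival])
      rw [hi]
      exact ((good_last b.2).1).symm
  right_inv p := by
    apply Subtype.ext
    apply DyckWord.ext
    show Lst n (dyckGoodFun p) = p.1.toList
    apply List.ext_get (by simp [dyck_length p.1 p.2])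
    intro i h1 h2
    have hi : i < 2*n := by simpa using h1
    have hil : i < p.1.toList.length := h2
    simp only [Lst, List.get_eq_getElem, List.getElem_ofFn, Fin.cast_mk, Fin.castSucc_mk]
    have hb : dyckGoodFun p ⟨i, by omega⟩ = (p.1.toList.get ⟨i, hil⟩ == U) := by
      unfold dyckGoodFun; rw [dif_pos hi]
    simp only [hb]
    rcases (p.1.toList.get ⟨i, hil⟩).dichotomy with h | h <;>
      rw [List.get_eq_getElem] at h <;> simp [h]

lemma card_good (n : ℕ) : (Finset.univ.filter (Good n)).card = catalan n := by
  rw [← Fintype.card_subtype, Fintype.card_congr (goodEquiv n),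
    DyckWord.card_dyckWord_semilength_eq_catalan]

end SRWaux

namespace SRWaux

lemma ext_pm {m : ℕ} (b : Fin m → Bool) {i : ℕ} (hi : i < m) :
    ext m b i = 1 ∨ ext m b i = -1 := by
  unfold ext; rw [dif_pos hi]; exact val_one_or _

lemma arith (n : ℕ) : (catalan n : ENNReal) * (1/2)^(2*n+1)
    = ENNReal.ofReal ((2:ℝ)^(-(1:ℤ) - 2*n) / (n+1) * (Nat.choose (2*n) n)) := by
  have hcat : (catalan n : ℝ) = (Nat.choose (2*n) n : ℝ) / (n+1) := by
    rw [catalan_eq_centralBinom_div,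
      Nat.cast_div (Nat.succ_dvd_centralBinom n) (by positivity),
      Nat.centralBinom_eq_two_mul_choose]
    push_cast; ring
  have hpow : (2:ℝ)^(-(1:ℤ) - 2*n) = (1/2:ℝ)^(2*n+1) := by
    have h1 : (-(1:ℤ) - 2*n) = -((2*n+1 : ℕ) : ℤ) := by push_cast; ring
    rw [h1, zpow_neg, zpow_natCast, one_div, inv_pow]
  have : ((2:ℝ)^(-(1:ℤ) - 2*n) / (n+1) * (Nat.choose (2*n) n))
      = (catalan n : ℝ) * (1/2:ℝ)^(2*n+1) := by
    rw [hcat, hpow]; ring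
  rw [this, ENNReal.ofReal_mul (by positivity), ENNReal.ofReal_natCast,
    ENNReal.ofReal_pow (by norm_num)]
  congr 1
  rw [show (1/2:ℝ) = 2⁻¹ by norm_num, ENNReal.ofReal_inv_of_pos (by norm_num),
    ENNReal.ofReal_ofNat]
  norm_num

end SRWaux


/-- Simple symmetric random walk started at 1: the probability that the first
hitting time of 0 equals `2n+1` is `2^(-1-2n)/(n+1) * C(2n,n)`. -/
theorem stmt_0
    {Ω : Type*} [MeasurableSpace Ω] (P : Measure Ω) [IsProbabilityMeasure P]
    (X : ℕ → Ω → ℤ) (hmeas : ∀ i, Measurable (X i))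
    (hindep : iIndepFun X P)
    (hup : ∀ i, P {ω | X i ω = 1} = 1/2)
    (hdown : ∀ i, P {ω | X i ω = -1} = 1/2)
    (S : ℕ → Ω → ℤ) (hS : ∀ n ω, S n ω = 1 + ∑ i ∈ Finset.range n, X i ω)
    (n : ℕ) :
    P {ω | S (2*n+1) ω = 0 ∧ ∀ k < 2*n+1, S k ω ≠ 0}
      = ENNReal.ofReal ((2:ℝ)^(-(1:ℤ) - 2*n) / (n+1) * (Nat.choose (2*n) n)) := by
  classical
  set m := 2*n+1 with hm
  set C : (Fin m → Bool) → Set Ω :=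
    fun b => ⋂ i ∈ Finset.range m, X i ⁻¹' {SRWaux.ext m b i} with hC
  have hCmeas : ∀ b, MeasurableSet (C b) := fun b =>
    MeasurableSet.biInter (Set.to_countable _)
      fun i _ => (hmeas i) (measurableSet_singleton _)
  have hhalf : ∀ (i : ℕ) (v : ℤ), v = 1 ∨ v = -1 → P (X i ⁻¹' {v}) = 1/2 := by
    rintro i v (rfl | rfl)
    · exact hup i
    · exact hdown i
  have hCP : ∀ b, P (C b) = (1/2 : ENNReal)^m := by
    intro b
    rw [hC]
    rw [hindep.meas_biInter
      (fun i _ => ⟨{SRWaux.ext m b i}, measurableSet_singleton _, rfl⟩)]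
    rw [Finset.prod_congr rfl
      (fun i hi => hhalf i _ (SRWaux.ext_pm b (Finset.mem_range.mp hi)))]
    rw [Finset.prod_const, Finset.card_range]
  set G : Set Ω := ⋂ i ∈ Finset.range m, ({ω | X i ω = 1} ∪ {ω | X i ω = -1}) with hG
  have hGc : P Gᶜ = 0 := by
    have h1 : ∀ i : ℕ, P ({ω | X i ω = 1} ∪ {ω | X i ω = -1})ᶜ = 0 := by
      intro i
      have hd : Disjoint {ω | X i ω = 1} {ω | X i ω = -1} := by
        rw [Set.disjoint_left]; rintro ω h1 h2
        simp only [Set.mem_setOf_eq] at h1 h2; rw [h1] at h2; norm_num at h2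
      have hmeas2 : MeasurableSet ({ω | X i ω = 1} ∪ {ω | X i ω = -1}) :=
        ((hmeas i) (measurableSet_singleton 1)).union
          ((hmeas i) (measurableSet_singleton (-1)))
      have hu : P ({ω | X i ω = 1} ∪ {ω | X i ω = -1}) = 1 := by
        rw [measure_union hd ((hmeas i) (measurableSet_singleton (-1))), hup i, hdown i,
          ENNReal.div_add_div_same, one_add_one_eq_two,
          ENNReal.div_self (by norm_num) (by norm_num)]
      rw [measure_compl hmeas2 (measure_ne_top _ _), hu, measure_univ, tsub_self]
    rw [hG, Set.compl_iInter₂]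
    refine le_antisymm ?_ zero_le
    calc P (⋃ i ∈ Finset.range m, ({ω | X i ω = 1} ∪ {ω | X i ω = -1})ᶜ)
        ≤ ∑ i ∈ Finset.range m, P (({ω | X i ω = 1} ∪ {ω | X i ω = -1})ᶜ) :=
          measure_biUnion_finset_le _ _
      _ = 0 := Finset.sum_eq_zero (fun i _ => h1 i)
  have key : ∀ (ω : Ω) (b : Fin m → Bool), (∀ i < m, X i ω = SRWaux.ext m b i) →
      ∀ k ≤ m, S k ω = 1 + SRWaux.psum m b k := by
    intro ω b hb k hk
    rw [hS]
    congr 1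
    exact Finset.sum_congr rfl fun i hi =>
      hb i (lt_of_lt_of_le (Finset.mem_range.mp hi) hk)
  have hAG : {ω | S m ω = 0 ∧ ∀ k < m, S k ω ≠ 0} ∩ G
      = ⋃ b ∈ Finset.univ.filter (SRWaux.Good n), C b := by
    ext ω
    simp only [Set.mem_inter_iff, Set.mem_setOf_eq, hG, Set.mem_iInter, Finset.mem_range,
      Set.mem_union, Set.mem_iUnion, Finset.mem_filter, Finset.mem_univ, true_and, hC,
      Set.mem_preimage, Set.mem_singleton_iff]
    constructor
    · rintro ⟨⟨hSm, hSk⟩, hXpm⟩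
      set b : Fin m → Bool := fun i => decide (X i ω = 1) with hbdef
      have hb : ∀ i < m, X i ω = SRWaux.ext m b i := by
        intro i hi
        unfold SRWaux.ext
        rw [dif_pos hi]
        rcases hXpm i hi with h | h <;> simp [hbdef, h, SRWaux.val]
      refine ⟨b, ⟨?_, ?_⟩, ?_⟩
      · intro k hk
        have := key ω b hb k (by omega)
        rw [← this]; exact hSk k hk
      · rw [← key ω b hb m le_rfl]; exact hSm
      · intro i hi; exact hb i hi
    · rintro ⟨b, hbGood, hbC⟩
      have hb : ∀ i < m, X i ω = SRWaux.ext m b i := fun i hi => hbC i hi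
      refine ⟨⟨?_, ?_⟩, ?_⟩
      · rw [key ω b hb m le_rfl]; exact hbGood.2
      · intro k hk; rw [key ω b hb k (by omega)]; exact hbGood.1 k hk
      · intro i hi
        rcases SRWaux.ext_pm b hi with h | h
        · left; rw [hb i hi, h]
        · right; rw [hb i hi, h]
  have hdisj : Set.PairwiseDisjoint (↑(Finset.univ.filter (SRWaux.Good n))) C := by
    intro b _ b' _ hbb'
    rw [Function.onFun, Set.disjoint_left]
    intro ω hω hω'
    apply hbb'
    funext i
    have h1 : X i ω = SRWaux.ext m b i := by
      simp only [hC, Set.mem_iInter, Set.mem_preimage, Set.mem_singleton_iff] at hω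
      exact hω i (Finset.mem_range.mpr i.isLt)
    have h2 : X i ω = SRWaux.ext m b' i := by
      simp only [hC, Set.mem_iInter, Set.mem_preimage, Set.mem_singleton_iff] at hω'
      exact hω' i (Finset.mem_range.mpr i.isLt)
    have h3 : SRWaux.ext m b i = SRWaux.ext m b' i := h1 ▸ h2
    unfold SRWaux.ext at h3
    rw [dif_pos i.isLt, dif_pos i.isLt] at h3
    have h4 : SRWaux.val (b ⟨i, i.isLt⟩) = SRWaux.val (b' ⟨i, i.isLt⟩) := h3
    rcases (b ⟨i, i.isLt⟩).eq_false_or_eq_true with h | h <;>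
      rcases (b' ⟨i, i.isLt⟩).eq_false_or_eq_true with h' | h' <;>
      rw [Fin.eta] at h h' <;> rw [h, h'] <;>
      simp [h, h', SRWaux.val] at h4 ⊢
  calc P {ω | S m ω = 0 ∧ ∀ k < m, S k ω ≠ 0}
      = P ({ω | S m ω = 0 ∧ ∀ k < m, S k ω ≠ 0} ∩ G) := (measure_inter_conull hGc).symm
    _ = P (⋃ b ∈ Finset.univ.filter (SRWaux.Good n), C b) := by rw [hAG]
    _ = ∑ b ∈ Finset.univ.filter (SRWaux.Good n), P (C b) :=
        measure_biUnion_finset hdisj (fun b _ => hCmeas b)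
    _ = (Finset.univ.filter (SRWaux.Good n)).card * (1/2 : ENNReal)^m := by
        rw [Finset.sum_congr rfl (fun b _ => hCP b), Finset.sum_const, nsmul_eq_mul]
    _ = (catalan n : ENNReal) * (1/2)^(2*n+1) := by rw [SRWaux.card_good n]
    _ = _ := SRWaux.arith n
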